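/- Let A be a finite arrangement of affine hyperplanes in a finite-dimensional vector space V over a field, let H ∈ A, let A' = A ∖ {H} be the deletion, and let A'' = {H ∩ K : K ∈ A', H ∩ K ≠ ∅} be the restriction, an arrangement of hyperplanes in the affine space H. Then the Poincaré polynomials satisfy π(A,t) = π(A',t) + t·π(A'',t). -/

import Mathlib

open scoped Classical

noncomputable section

variable (K : Type) [Field K] {V : Type} [AddCommGroup V] [Module K V]

/-- An affine hyperplane in `V`: the level set of a nonzero linear functional. -/
def IsHyperplane (H : Set V) : Prop :=
  ∃ (f : V →ₗ[K] K) (c : K), f ≠ 0 ∧ H = {x | f x = c}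

/-- The dimension of a subset of `V`: the dimension of its affine span. -/
def flatDim (X : Set V) : ℕ := Module.finrank K (affineSpan K X).direction

/-- The intersection poset `L(A)` of the arrangement `A` inside the ambient set `W`:
all nonempty intersections of subfamilies of `A` (intersected with the ambient `W`),
the empty subfamily giving `W` itself. -/
def interPosetIn (W : Set V) (A : Finset (Set V)) : Finset (Set V) :=
  (A.powerset.image fun S => W ∩ ⋂ H ∈ S, H).filter fun X => X.Nonempty

/-- The rank of `X`: its codimension within the ambient space `W`. -/
def rkIn (W X : Set V) : ℕ := flatDim K W - flatDim K X

/-- `μ` satisfies the defining recursion of the Möbius function of the poset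
`L(A)` inside the ambient set `W`.  `L(A)` is ordered by reverse inclusion, so the
condition `μ(W) = 1`, `μ(X) = -∑_{Y < X} μ(Y)` for `X > W` is equivalent to:
for every `X ∈ L(A)`, `∑_{Y ⊇ X} μ(Y)` is `1` if `X = W` and `0` otherwise. -/
def IsMobiusIn (W : Set V) (A : Finset (Set V)) (μ : Set V → ℤ) : Prop :=
  ∀ X ∈ interPosetIn W A,
    (∑ Y ∈ (interPosetIn W A).filter fun Y => X ⊆ Y, μ Y) = if X = W then 1 else 0

/-- The Poincaré polynomial `π(A,t) = ∑_{X ∈ L(A)} μ(X) (-t)^{r(X)}`. -/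
def poinIn (W : Set V) (A : Finset (Set V)) (μ : Set V → ℤ) : Polynomial ℤ :=
  ∑ X ∈ interPosetIn W A, Polynomial.C (μ X) * (- Polynomial.X) ^ (rkIn K W X)

/-- A chamber of the arrangement `A` within the ambient set `W`: a connected
component of `W ∖ ⋃_{H ∈ A} H`. -/
def IsChamberIn [TopologicalSpace V] (W : Set V) (A : Finset (Set V)) (C : Set V) : Prop :=
  ∃ x ∈ W ∩ (⋃ H ∈ A, (H : Set V))ᶜ, C = connectedComponentIn (W ∩ (⋃ H ∈ A, (H : Set V))ᶜ) x

/-- `F` is a generic (transversal) `q`-dimensional affine subspace for the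
arrangement `A`: it is (the carrier of) an affine subspace of dimension `q`, and
for every `X ∈ L(A)`, if `r(X) ≤ q` then `F ∩ X` is nonempty of dimension
`q - r(X)`, and if `r(X) > q` then `F ∩ X = ∅`. -/
def IsGenericFlat (q : ℕ) (A : Finset (Set V)) (F : Set V) : Prop :=
  (∃ W : AffineSubspace K V, (W : Set V) = F) ∧ F.Nonempty ∧ flatDim K F = q ∧
  ∀ X ∈ interPosetIn Set.univ A,
    (rkIn K Set.univ X ≤ q → (F ∩ X).Nonempty ∧ flatDim K (F ∩ X) = q - rkIn K Set.univ X) ∧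
    (q < rkIn K Set.univ X → F ∩ X = ∅)

end
section Aux

open Finset

variable {V : Type}

/-- Whitney-style candidate Möbius function: alternating sum over subfamilies
with prescribed intersection. -/
noncomputable def whitneyMu (W : Set V) (B : Finset (Set V)) (X : Set V) : ℤ :=
  ∑ S ∈ B.powerset.filter (fun S => (W ∩ ⋂ H ∈ S, H) = X), (-1 : ℤ) ^ S.card

lemma mem_interPosetIn {W X : Set V} {B : Finset (Set V)} :
    X ∈ interPosetIn W B ↔ (∃ S, S ⊆ B ∧ (W ∩ ⋂ H ∈ S, H) = X) ∧ X.Nonempty := by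
  simp [interPosetIn, Finset.mem_filter, Finset.mem_image, Finset.mem_powerset]

lemma biInter_subset_of_mem {S : Finset (Set V)} {K : Set V} (hK : K ∈ S) {W : Set V} :
    (W ∩ ⋂ H ∈ S, H) ⊆ K :=
  (Set.inter_subset_right).trans (Set.biInter_subset_of_mem hK)

lemma subset_inter_biInter {S : Finset (Set V)} {W X : Set V} (hW : X ⊆ W)
    (h : ∀ K ∈ S, X ⊆ K) : X ⊆ W ∩ ⋂ H ∈ S, H := by
  refine Set.subset_inter hW ?_
  intro x hx
  simp only [Set.mem_iInter]
  exact fun K hK => h K hK hx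

/-- Uniqueness of the Möbius function of `L(A)`. -/
lemma isMobiusIn_unique {W : Set V} {B : Finset (Set V)} {μ ν : Set V → ℤ}
    (hμ : IsMobiusIn W B μ) (hν : IsMobiusIn W B ν) :
    ∀ X ∈ interPosetIn W B, μ X = ν X := by
  set L := interPosetIn W B with hLdef
  have key : ∀ n : ℕ, ∀ X ∈ L, (L.filter fun Y => X ⊆ Y ∧ Y ≠ X).card ≤ n → μ X = ν X := by
    intro n
    induction n with
    | zero =>
      intro X hX hcard
      have hstrict : L.filter (fun Y => X ⊆ Y ∧ Y ≠ X) = ∅ :=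
        card_eq_zero.mp (Nat.le_zero.mp hcard)
      have hfil : L.filter (fun Y => X ⊆ Y) = {X} := by
        ext Y
        simp only [mem_filter, mem_singleton]
        constructor
        · rintro ⟨hY, hXY⟩
          by_contra hne
          have : Y ∈ L.filter (fun Y => X ⊆ Y ∧ Y ≠ X) :=
            mem_filter.2 ⟨hY, hXY, fun h => hne h⟩
          simp [hstrict] at this
        · rintro rfl; exact ⟨hX, subset_rfl⟩
      have h1 := hμ X hX
      have h2 := hν X hX
      rw [hfil, sum_singleton] at h1 h2
      rw [h1, h2]
    | succ n ih =>
      intro X hX hcard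
      have split : L.filter (fun Y => X ⊆ Y)
          = insert X (L.filter fun Y => X ⊆ Y ∧ Y ≠ X) := by
        ext Y
        simp only [mem_insert, mem_filter]
        constructor
        · rintro ⟨hY, hXY⟩
          rcases eq_or_ne Y X with h | h
          · exact Or.inl h
          · exact Or.inr ⟨hY, hXY, h⟩
        · rintro (rfl | ⟨hY, hXY, _⟩)
          · exact ⟨hX, subset_rfl⟩
          · exact ⟨hY, hXY⟩
      have hXnot : X ∉ L.filter (fun Y => X ⊆ Y ∧ Y ≠ X) := by simp
      have h1 := hμ X hX
      have h2 := hν X hX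
      rw [split, sum_insert hXnot] at h1 h2
      have hagree : ∀ Y ∈ L.filter (fun Y => X ⊆ Y ∧ Y ≠ X), μ Y = ν Y := by
        intro Y hY
        obtain ⟨hYL, hXY, hYX⟩ := mem_filter.mp hY
        apply ih Y hYL
        have hss : L.filter (fun Z => Y ⊆ Z ∧ Z ≠ Y) ⊂ L.filter (fun Z => X ⊆ Z ∧ Z ≠ X) := by
          refine Finset.ssubset_iff_of_subset ?_ |>.mpr ⟨Y, hY, by simp⟩
          intro Z hZ
          obtain ⟨hZL, hYZ, hZY⟩ := mem_filter.mp hZ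
          refine mem_filter.2 ⟨hZL, hXY.trans hYZ, ?_⟩
          rintro rfl
          exact hYX (Set.Subset.antisymm hYZ hXY)
        have := Finset.card_lt_card hss
        omega
      rw [Finset.sum_congr rfl hagree] at h1
      have := h1.trans h2.symm
      exact add_right_cancel this
  intro X hX
  exact key _ X hX le_rfl

/-- The Whitney alternating sum satisfies the Möbius recursion. -/
lemma whitneyMu_isMobius (W : Set V) (B : Finset (Set V)) (hW : ∀ K ∈ B, ¬ W ⊆ K) :
    IsMobiusIn W B (whitneyMu W B) := by
  intro X hX
  obtain ⟨⟨S₀, hS₀B, hS₀⟩, hXne⟩ := mem_interPosetIn.mp hX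
  have hXW : X ⊆ W := hS₀ ▸ Set.inter_subset_left
  have h1 : (∑ Y ∈ (interPosetIn W B).filter fun Y => X ⊆ Y, whitneyMu W B Y)
      = ∑ S ∈ B.powerset.filter
          (fun S => (W ∩ ⋂ H ∈ S, H) ∈ (interPosetIn W B).filter fun Y => X ⊆ Y),
          (-1 : ℤ) ^ S.card := by
    exact Finset.sum_fiberwise_eq_sum_filter _ _ _ _
  set T := B.filter (fun K => X ⊆ K) with hT
  have h2 : B.powerset.filter
      (fun S => (W ∩ ⋂ H ∈ S, H) ∈ (interPosetIn W B).filter fun Y => X ⊆ Y)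
      = T.powerset := by
    ext S
    simp only [mem_filter, mem_powerset, hT]
    constructor
    · rintro ⟨hSB, _, hXsub⟩
      intro K hK
      exact mem_filter.2 ⟨hSB hK, hXsub.trans (biInter_subset_of_mem hK)⟩
    · intro hST
      have hSB : S ⊆ B := hST.trans (filter_subset _ _)
      have hXsub : X ⊆ W ∩ ⋂ H ∈ S, H :=
        subset_inter_biInter hXW (fun K hK => (mem_filter.mp (hST hK)).2)
      exact ⟨hSB, mem_interPosetIn.mpr ⟨⟨S, hSB, rfl⟩, hXne.mono hXsub⟩, hXsub⟩
  have hTempty : T = ∅ ↔ X = W := by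
    constructor
    · intro hTe
      have hS₀T : S₀ ⊆ T := by
        intro K hK
        exact mem_filter.2 ⟨hS₀B hK, hS₀ ▸ biInter_subset_of_mem hK⟩
      rw [hTe, Finset.subset_empty] at hS₀T
      subst hS₀T
      simpa using hS₀.symm
    · rintro rfl
      rw [Finset.eq_empty_iff_forall_notMem]
      intro K hK
      obtain ⟨hKB, hXK⟩ := mem_filter.mp hK
      exact hW K hKB hXK
  rw [show (whitneyMu W B) = fun Y => whitneyMu W B Y from rfl] at *
  rw [h1, h2, Finset.sum_powerset_neg_one_pow_card]
  by_cases h : X = W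
  · rw [if_pos (hTempty.mpr h), if_pos h]
  · rw [if_neg (fun he => h (hTempty.mp he)), if_neg h]

end Aux
section Aux2

open Finset

variable (K : Type) [Field K] {V : Type} [AddCommGroup V] [Module K V]

/-- The Whitney expansion of the Poincaré polynomial: a sum over all subfamilies
with nonempty intersection. -/
lemma poinIn_whitney (W : Set V) (B : Finset (Set V)) :
    poinIn K W B (whitneyMu W B)
      = ∑ S ∈ B.powerset.filter (fun S => (W ∩ ⋂ H ∈ S, H).Nonempty),
          Polynomial.C ((-1 : ℤ) ^ S.card)
            * (- Polynomial.X) ^ (rkIn K W (W ∩ ⋂ H ∈ S, H)) := by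
  unfold poinIn
  have step : ∀ X ∈ interPosetIn W B,
      Polynomial.C (whitneyMu W B X) * (- Polynomial.X) ^ (rkIn K W X)
        = ∑ S ∈ B.powerset.filter (fun S => (W ∩ ⋂ H ∈ S, H) = X),
            Polynomial.C ((-1 : ℤ) ^ S.card)
              * (- Polynomial.X) ^ (rkIn K W (W ∩ ⋂ H ∈ S, H)) := by
    intro X hX
    unfold whitneyMu
    rw [map_sum, Finset.sum_mul]
    exact Finset.sum_congr rfl fun S hS => by rw [(Finset.mem_filter.mp hS).2]
  rw [Finset.sum_congr rfl step,
    Finset.sum_fiberwise_eq_sum_filter B.powerset (interPosetIn W B)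
      (fun S => W ∩ ⋂ H ∈ S, H)
      (fun S => Polynomial.C ((-1 : ℤ) ^ S.card)
        * (- Polynomial.X) ^ (rkIn K W (W ∩ ⋂ H ∈ S, H)))]
  refine Finset.sum_congr ?_ (fun _ _ => rfl)
  ext S
  simp only [Finset.mem_filter, Finset.mem_powerset]
  constructor
  · rintro ⟨hSB, hmem⟩
    exact ⟨hSB, (mem_interPosetIn.mp hmem).2⟩
  · rintro ⟨hSB, hne⟩
    exact ⟨hSB, mem_interPosetIn.mpr ⟨⟨S, hSB, rfl⟩, hne⟩⟩

lemma flatDim_univ [FiniteDimensional K V] :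
    flatDim K (Set.univ : Set V) = Module.finrank K V := by
  unfold flatDim
  rw [AffineSubspace.span_univ, AffineSubspace.direction_top]
  exact finrank_top K V

lemma flatDim_mono [FiniteDimensional K V] {X Y : Set V} (h : X ⊆ Y) :
    flatDim K X ≤ flatDim K Y :=
  Submodule.finrank_mono (AffineSubspace.direction_le (affineSpan_mono K h))

/-- Dimension of an affine hyperplane. -/
lemma flatDim_hyperplane [FiniteDimensional K V] {H : Set V} (f : V →ₗ[K] K) (c : K)
    (hf : f ≠ 0) (hHeq : H = {x | f x = c}) :
    H.Nonempty ∧ flatDim K H + 1 = Module.finrank K V := by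
  obtain ⟨y, hy⟩ : ∃ y, f y ≠ 0 := by
    by_contra h
    push_neg at h
    exact hf (LinearMap.ext fun x => by simp [h x])
  have hmem : ∀ x : V, x ∈ H ↔ f x = c := fun x => by rw [hHeq]; rfl
  have hne : H.Nonempty := ⟨(c / f y) • y, (hmem _).mpr (by rw [map_smul, smul_eq_mul, div_mul_cancel₀ _ hy])⟩
  refine ⟨hne, ?_⟩
  obtain ⟨x₀, hx₀⟩ := hne
  have hx₀' : f x₀ = c := (hmem _).mp hx₀
  have hdir : vectorSpan K H = LinearMap.ker f := by
    apply le_antisymm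
    · rw [vectorSpan_def]
      rw [Submodule.span_le]
      rintro v hv
      obtain ⟨a, ha, b, hb, rfl⟩ := hv
      have : f a = c := (hmem _).mp ha
      have hb' : f b = c := (hmem _).mp hb
      simp only [SetLike.mem_coe, LinearMap.mem_ker, vsub_eq_sub, map_sub, this, hb', sub_self]
    · intro v hv
      rw [LinearMap.mem_ker] at hv
      have h1 : x₀ + v ∈ H := (hmem _).mpr (by simp [hv, hx₀'])
      have h2 : (x₀ + v) -ᵥ x₀ = v := by simp
      rw [vectorSpan_def]
      exact Submodule.subset_span ⟨x₀ + v, h1, x₀, hx₀, h2⟩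
  have hker : Module.finrank K (LinearMap.ker f) + 1 = Module.finrank K V := by
    have hrange : LinearMap.range f = ⊤ := by
      rw [LinearMap.range_eq_top]
      intro a
      exact ⟨(a / f y) • y, by rw [map_smul, smul_eq_mul, div_mul_cancel₀ _ hy]⟩
    have := LinearMap.finrank_range_add_finrank_ker f
    rw [hrange] at this
    rw [finrank_top K K, Module.finrank_self] at this
    omega
  unfold flatDim
  rw [direction_affineSpan, hdir]
  exact hker

/-- A hyperplane contained in another hyperplane equals it. -/
lemma hyperplane_subset_eq {H K' : Set V} (hH : IsHyperplane K H) (hK : IsHyperplane K K')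
    (hne : H.Nonempty) (hsub : H ⊆ K') : H = K' := by
  obtain ⟨f, c, hf, rfl⟩ := hH
  obtain ⟨g, d, hg, rfl⟩ := hK
  obtain ⟨x₀, hx₀⟩ := hne
  have hx₀' : f x₀ = c := hx₀
  have hx₀'' : g x₀ = d := hsub hx₀
  obtain ⟨y, hy⟩ : ∃ y, f y ≠ 0 := by
    by_contra h
    push_neg at h
    exact hf (LinearMap.ext fun x => by simp [h x])
  set y' : V := (f y)⁻¹ • y with hy'def
  have hfy' : f y' = 1 := by
    rw [hy'def]; simp [hy]
  have hkermono : ∀ v, f v = 0 → g v = 0 := by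
    intro v hv
    have h1 : x₀ + v ∈ {x | f x = c} := by simp [hv, hx₀']
    have h2 : g (x₀ + v) = d := hsub h1
    have h3 : g v = g (x₀ + v) - g x₀ := by rw [map_add]; ring
    rw [h3, h2, hx₀'', sub_self]
  have hgv : ∀ v : V, g v = f v * g y' := by
    intro v
    have h0 : f (v - (f v) • y') = 0 := by simp [hfy']
    have := hkermono _ h0
    rw [map_sub, map_smul, smul_eq_mul, sub_eq_zero] at this
    rw [this]
  have hgy' : g y' ≠ 0 := by
    intro h0
    apply hg
    apply LinearMap.ext
    intro v
    simp [hgv v, h0]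
  ext x
  simp only [Set.mem_setOf_eq]
  rw [hgv x]
  have hc : c * g y' = d := by rw [← hx₀', ← hgv x₀, hx₀'']
  constructor
  · intro h; rw [h, ← hc]
  · intro h
    have : f x * g y' = c * g y' := by rw [h, hc]
    exact mul_right_cancel₀ hgy' this

/-- Rank within the ambient space versus rank within a hyperplane. -/
lemma rkIn_succ [FiniteDimensional K V] {H Y : Set V}
    (hHdim : flatDim K H + 1 = Module.finrank K V) (hY : Y ⊆ H) :
    rkIn K Set.univ Y = rkIn K H Y + 1 := by
  unfold rkIn
  rw [flatDim_univ]
  have h1 : flatDim K Y ≤ flatDim K H := flatDim_mono K hY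
  omega

end Aux2
section Aux3

open Finset

variable {V : Type}

/-- Restricting to `H` the deleted arrangement gives the same intersection poset as
the restricted arrangement. -/
lemma interPoset_restrict (H : Set V) (B : Finset (Set V)) :
    interPosetIn H ((B.image fun K' => H ∩ K').filter fun Y => Y.Nonempty)
      = interPosetIn H B := by
  ext X
  rw [mem_interPosetIn, mem_interPosetIn]
  constructor
  · rintro ⟨⟨S, hS, rfl⟩, hne⟩
    refine ⟨⟨B.filter (fun K' => H ∩ K' ∈ S), Finset.filter_subset _ _, ?_⟩, hne⟩
    ext x
    simp only [Set.mem_inter_iff, Set.mem_iInter, Finset.mem_filter]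
    constructor
    · rintro ⟨hxH, hx⟩
      refine ⟨hxH, fun Y hY => ?_⟩
      obtain ⟨K', hK', rfl⟩ := Finset.mem_image.mp (Finset.mem_filter.mp (hS hY)).1
      exact ⟨hxH, hx K' ⟨hK', hY⟩⟩
    · rintro ⟨hxH, hx⟩
      exact ⟨hxH, fun K' h => (hx _ h.2).2⟩
  · rintro ⟨⟨S', hS', rfl⟩, hne⟩
    refine ⟨⟨S'.image (fun K' => H ∩ K'), ?_, ?_⟩, hne⟩
    · intro Y hY
      obtain ⟨K', hK', rfl⟩ := Finset.mem_image.mp hY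
      refine Finset.mem_filter.2 ⟨Finset.mem_image_of_mem _ (hS' hK'), ?_⟩
      exact hne.mono (Set.inter_subset_inter subset_rfl (Set.biInter_subset_of_mem hK'))
    · ext x
      simp only [Set.mem_inter_iff, Set.mem_iInter, Finset.mem_image]
      constructor
      · rintro ⟨hxH, hx⟩
        exact ⟨hxH, fun K' hK' => (hx _ ⟨K', hK', rfl⟩).2⟩
      · rintro ⟨hxH, hx⟩
        refine ⟨hxH, ?_⟩
        rintro Y ⟨K', hK', rfl⟩
        exact ⟨hxH, hx K' hK'⟩

lemma univ_inter_eq_erase {H : Set V} {S : Finset (Set V)} (hHS : H ∈ S) :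
    (Set.univ ∩ ⋂ K ∈ S, K) = H ∩ ⋂ K ∈ S.erase H, K := by
  ext x
  simp only [Set.mem_inter_iff, Set.mem_univ, true_and, Set.mem_iInter, Finset.mem_erase]
  constructor
  · intro hx
    exact ⟨hx H hHS, fun K hK => hx K hK.2⟩
  · rintro ⟨hxH, hx⟩
    intro K hK
    by_cases h : K = H
    · subst h; exact hxH
    · exact hx K ⟨h, hK⟩

end Aux3
/-- **Deletion–Restriction.** For a finite arrangement `A` of affine
hyperplanes in a finite-dimensional vector space over a field, `H ∈ A`, deletion
`A' = A \ {H}` and restriction `A'' = {H ∩ K : K ∈ A', H ∩ K ≠ ∅}` (an arrangement in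
the affine space `H`), the Poincaré polynomials satisfy
`π(A,t) = π(A',t) + t·π(A'',t)`. -/
theorem deletion_restriction {K : Type} [Field K] {V : Type} [AddCommGroup V]
    [Module K V] [FiniteDimensional K V]
    (A : Finset (Set V)) (hA : ∀ H ∈ A, IsHyperplane K H) (H : Set V) (hH : H ∈ A)
    (μ μ' μ'' : Set V → ℤ)
    (hμ : IsMobiusIn Set.univ A μ)
    (hμ' : IsMobiusIn Set.univ (A.erase H) μ')
    (hμ'' : IsMobiusIn H
      (((A.erase H).image fun K' => H ∩ K').filter fun Y => Y.Nonempty) μ'') :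
    poinIn K Set.univ A μ
      = poinIn K Set.univ (A.erase H) μ'
        + Polynomial.X * poinIn K H
            (((A.erase H).image fun K' => H ∩ K').filter fun Y => Y.Nonempty) μ'' := by
  classical
  obtain ⟨f, c, hf, hHeq⟩ := hA H hH
  obtain ⟨hHne, hHdim⟩ := flatDim_hyperplane K f c hf hHeq
  have hWuniv : ∀ K' ∈ A, ¬ (Set.univ : Set V) ⊆ K' := by
    intro K' hK' hsub
    obtain ⟨g, d, hg, hKeq⟩ := hA K' hK'
    obtain ⟨y, hy⟩ : ∃ y, g y ≠ 0 := by
      by_contra h; push_neg at h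
      exact hg (LinearMap.ext fun x => by simp [h x])
    have h0 : g 0 = d := by
      have := hsub (Set.mem_univ 0); rw [hKeq] at this; exact this
    have h1 : g y = d := by
      have := hsub (Set.mem_univ y); rw [hKeq] at this; exact this
    rw [map_zero] at h0
    exact hy (by rw [h1, ← h0])
  have hWH : ∀ K' ∈ A.erase H, ¬ H ⊆ K' := by
    intro K' hK' hsub
    exact (Finset.ne_of_mem_erase hK')
      (hyperplane_subset_eq K (hA H hH) (hA K' (Finset.mem_of_mem_erase hK')) hHne hsub).symm
  have hL := interPoset_restrict H (A.erase H)
  have hmA : ∀ X ∈ interPosetIn Set.univ A, μ X = whitneyMu Set.univ A X :=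
    isMobiusIn_unique hμ (whitneyMu_isMobius _ _ hWuniv)
  have hmA' : ∀ X ∈ interPosetIn Set.univ (A.erase H),
      μ' X = whitneyMu Set.univ (A.erase H) X :=
    isMobiusIn_unique hμ'
      (whitneyMu_isMobius _ _ (fun K' hK' => hWuniv K' (Finset.mem_of_mem_erase hK')))
  have hμ''2 : IsMobiusIn H (A.erase H) μ'' := by
    unfold IsMobiusIn at hμ'' ⊢
    rw [← hL]
    exact hμ''
  have hmA'' : ∀ X ∈ interPosetIn H (A.erase H), μ'' X = whitneyMu H (A.erase H) X :=
    isMobiusIn_unique hμ''2 (whitneyMu_isMobius _ _ hWH)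
  have hpA : poinIn K Set.univ A μ
      = ∑ S ∈ A.powerset.filter (fun S => (Set.univ ∩ ⋂ H ∈ S, H).Nonempty),
          Polynomial.C ((-1 : ℤ) ^ S.card)
            * (- Polynomial.X) ^ (rkIn K Set.univ (Set.univ ∩ ⋂ H ∈ S, H)) := by
    rw [← poinIn_whitney]
    unfold poinIn
    exact Finset.sum_congr rfl fun X hX => by rw [hmA X hX]
  have hpA' : poinIn K Set.univ (A.erase H) μ'
      = ∑ S ∈ (A.erase H).powerset.filter (fun S => (Set.univ ∩ ⋂ H ∈ S, H).Nonempty),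
          Polynomial.C ((-1 : ℤ) ^ S.card)
            * (- Polynomial.X) ^ (rkIn K Set.univ (Set.univ ∩ ⋂ H ∈ S, H)) := by
    rw [← poinIn_whitney]
    unfold poinIn
    exact Finset.sum_congr rfl fun X hX => by rw [hmA' X hX]
  have hpA'' : poinIn K H (((A.erase H).image fun K' => H ∩ K').filter fun Y => Y.Nonempty) μ''
      = ∑ S ∈ (A.erase H).powerset.filter (fun S => (H ∩ ⋂ K' ∈ S, K').Nonempty),
          Polynomial.C ((-1 : ℤ) ^ S.card)
            * (- Polynomial.X) ^ (rkIn K H (H ∩ ⋂ K' ∈ S, K')) := by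
    have e1 : poinIn K H (((A.erase H).image fun K' => H ∩ K').filter fun Y => Y.Nonempty) μ''
        = poinIn K H (A.erase H) μ'' := by
      unfold poinIn
      rw [hL]
    rw [e1, ← poinIn_whitney]
    unfold poinIn
    exact Finset.sum_congr rfl fun X hX => by rw [hmA'' X hX]
  rw [hpA, hpA', hpA'']
  rw [← Finset.sum_filter_add_sum_filter_not
    (A.powerset.filter fun S => (Set.univ ∩ ⋂ H ∈ S, H).Nonempty) (fun S => H ∉ S)]
  congr 1
  · refine Finset.sum_congr ?_ (fun _ _ => rfl)
    rw [Finset.filter_filter]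
    ext S
    simp only [Finset.mem_filter, Finset.mem_powerset, Finset.subset_erase]
    tauto
  · rw [Finset.mul_sum]
    refine Finset.sum_nbij' (fun S => S.erase H) (fun S' => insert H S') ?_ ?_ ?_ ?_ ?_
    · intro S hS
      simp only [Finset.mem_filter, Finset.mem_powerset, not_not] at hS
      obtain ⟨⟨hSA, hSne⟩, hHS⟩ := hS
      rw [univ_inter_eq_erase hHS] at hSne
      simp only [Finset.mem_filter, Finset.mem_powerset]
      exact ⟨Finset.erase_subset_erase _ hSA, hSne⟩
    · intro S' hS'
      simp only [Finset.mem_filter, Finset.mem_powerset] at hS'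
      obtain ⟨hS'A, hS'ne⟩ := hS'
      have hHS' : H ∉ S' := fun h => (Finset.mem_erase.mp (hS'A h)).1 rfl
      have hsub : insert H S' ⊆ A :=
        Finset.insert_subset hH (hS'A.trans (Finset.erase_subset _ _))
      have hHins : H ∈ insert H S' := Finset.mem_insert_self _ _
      simp only [Finset.mem_filter, Finset.mem_powerset, not_not]
      refine ⟨⟨hsub, ?_⟩, hHins⟩
      rw [univ_inter_eq_erase hHins, Finset.erase_insert hHS']
      exact hS'ne
    · intro S hS
      simp only [Finset.mem_filter, not_not] at hS
      exact Finset.insert_erase hS.2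
    · intro S' hS'
      simp only [Finset.mem_filter, Finset.mem_powerset] at hS'
      have hHS' : H ∉ S' := fun h => (Finset.mem_erase.mp (hS'.1 h)).1 rfl
      exact Finset.erase_insert hHS'
    · intro S hS
      simp only [Finset.mem_filter, Finset.mem_powerset, not_not] at hS
      obtain ⟨⟨hSA, hSne⟩, hHS⟩ := hS
      rw [univ_inter_eq_erase hHS]
      rw [rkIn_succ K hHdim Set.inter_subset_left]
      have hcard : (S.erase H).card + 1 = S.card := Finset.card_erase_add_one hHS
      rw [← hcard, pow_succ, pow_succ, map_mul, map_neg, map_one]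
      ring
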